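/- Let S and A be finite nonempty sets, let (π_1, p_1) and (π_2, p_2) be two policy/dynamics pairs sharing an initial state distribution ρ0, let r be a reward bounded in absolute value by r_max ≥ 0, and γ ∈ (0,1). Suppose (i) for every timestep t, the expectation over (s,a) drawn from the time-t state-action marginal of (π_1, p_1) of TV(p_1(·|s,a), p_2(·|s,a)) is at most ε_m, and (ii) max_s TV(π_1(·|s), π_2(·|s)) ≤ ε_π. Then the respective discounted returns satisfy |η_1 − η_2| ≤ 2·r_max·[ γ·(ε_π + ε_m)/(1−γ)² + ε_π/(1−γ) ]. -/

import Mathlib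

open scoped BigOperators

/-- Total variation distance between two probability mass functions on a finite type. -/
noncomputable def tv {X : Type*} [Fintype X] (q1 q2 : PMF X) : ℝ :=
  (1 / 2) * ∑ x, |(q1 x).toReal - (q2 x).toReal|

/-- Total variation distance between two real-valued distributions on a finite type. -/
noncomputable def tvFun {X : Type*} [Fintype X] (d1 d2 : X → ℝ) : ℝ :=
  (1 / 2) * ∑ x, |d1 x - d2 x|

/-- Time-`t` state-action marginal of a (possibly time-varying) policy/dynamics pair,
started from initial state distribution `ρ0`:  `d⁰(s,a) = ρ0(s)·π₀(a|s)` and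
`d^{t+1}(s,a) = Σ_{s',a'} d^t(s',a')·p_t(s|s',a')·π_{t+1}(a|s)`. -/
noncomputable def marginal {S A : Type*} [Fintype S] [Fintype A]
    (ρ0 : PMF S) (πseq : ℕ → S → PMF A) (pseq : ℕ → S × A → PMF S) :
    ℕ → S × A → ℝ
  | 0 => fun sa => (ρ0 sa.1).toReal * ((πseq 0 sa.1) sa.2).toReal
  | t + 1 => fun sa =>
      ∑ s' : S, ∑ a' : A,
        marginal ρ0 πseq pseq t (s', a') * ((pseq t (s', a')) sa.1).toReal *
          ((πseq (t + 1) sa.1) sa.2).toReal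

/-- Discounted return `η = Σ_t γ^t Σ_{s,a} d^t(s,a)·r(s,a)`. -/
noncomputable def ret {S A : Type*} [Fintype S] [Fintype A]
    (γ : ℝ) (r : S × A → ℝ) (d : ℕ → S × A → ℝ) : ℝ :=
  ∑' t : ℕ, γ ^ t * ∑ sa : S × A, d t sa * r sa

section Aux

variable {S A : Type*} [Fintype S] [Fintype A]

lemma pmf_sum_one {X : Type*} [Fintype X] (p : PMF X) : ∑ x, (p x).toReal = 1 := by
  have h := p.tsum_coe
  rw [tsum_fintype] at h
  rw [← ENNReal.toReal_sum (fun x _ => p.apply_ne_top x), h, ENNReal.toReal_one]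

lemma tv_nonneg {X : Type*} [Fintype X] (q1 q2 : PMF X) : 0 ≤ tv q1 q2 := by
  have : (0:ℝ) ≤ ∑ x, |(q1 x).toReal - (q2 x).toReal| :=
    Finset.sum_nonneg fun x _ => abs_nonneg _
  unfold tv; linarith

lemma sum_abs_eq_two_tv {X : Type*} [Fintype X] (q1 q2 : PMF X) :
    ∑ x, |(q1 x).toReal - (q2 x).toReal| = 2 * tv q1 q2 := by
  unfold tv; ring

lemma sum_comm4 {α β γ δ M : Type*} [AddCommMonoid M] [Fintype α] [Fintype β] [Fintype γ]
    [Fintype δ] (f : α → β → γ → δ → M) :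
    ∑ a, ∑ b, ∑ c, ∑ d, f a b c d = ∑ c, ∑ d, ∑ a, ∑ b, f a b c d := by
  trans ∑ a, ∑ c, ∑ b, ∑ d, f a b c d
  · exact Finset.sum_congr rfl fun a _ => Finset.sum_comm
  trans ∑ c, ∑ a, ∑ b, ∑ d, f a b c d
  · exact Finset.sum_comm
  refine Finset.sum_congr rfl fun c _ => ?_
  trans ∑ a, ∑ d, ∑ b, f a b c d
  · exact Finset.sum_congr rfl fun a _ => Finset.sum_comm
  exact Finset.sum_comm

lemma marginal_nonneg (ρ0 : PMF S) (πseq : ℕ → S → PMF A) (pseq : ℕ → S × A → PMF S) :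
    ∀ t sa, 0 ≤ marginal ρ0 πseq pseq t sa
  | 0, sa => mul_nonneg ENNReal.toReal_nonneg ENNReal.toReal_nonneg
  | t+1, sa => Finset.sum_nonneg fun s' _ => Finset.sum_nonneg fun a' _ =>
      mul_nonneg (mul_nonneg (marginal_nonneg ρ0 πseq pseq t _) ENNReal.toReal_nonneg)
        ENNReal.toReal_nonneg

lemma marginal_sum_one (ρ0 : PMF S) (πseq : ℕ → S → PMF A) (pseq : ℕ → S × A → PMF S) :
    ∀ t, ∑ sa : S × A, marginal ρ0 πseq pseq t sa = 1 := by
  intro t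
  induction t with
  | zero =>
      simp only [marginal, Fintype.sum_prod_type, ← Finset.mul_sum, pmf_sum_one, mul_one]
  | succ t ih =>
      simp only [marginal, Fintype.sum_prod_type]
      rw [sum_comm4]
      have h : ∀ s' a', ∑ s : S, ∑ a : A,
          marginal ρ0 πseq pseq t (s', a') * ((pseq t (s', a')) s).toReal *
            ((πseq (t + 1) s) a).toReal = marginal ρ0 πseq pseq t (s', a') := by
        intro s' a'
        simp only [← Finset.mul_sum, pmf_sum_one, mul_one]
      simp only [h]
      rw [Fintype.sum_prod_type] at ih
      exact ih

lemma sum_marginal_abs_le [Nonempty S] (ρ0 : PMF S) (p1 p2 : S × A → PMF S) (π1 π2 : S → PMF A)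
    (εm επ : ℝ)
    (hεm : ∀ t : ℕ, ∑ sa : S × A,
      marginal ρ0 (fun _ => π1) (fun _ => p1) t sa * tv (p1 sa) (p2 sa) ≤ εm)
    (hεπ : ∀ s : S, tv (π1 s) (π2 s) ≤ επ) :
    ∀ t : ℕ, ∑ sa : S × A,
        |marginal ρ0 (fun _ => π1) (fun _ => p1) t sa -
          marginal ρ0 (fun _ => π2) (fun _ => p2) t sa| ≤ 2 * (t * (εm + επ) + επ) := by
  set d1 := marginal ρ0 (fun _ => π1) (fun _ => p1) with hd1
  set d2 := marginal ρ0 (fun _ => π2) (fun _ => p2) with hd2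
  intro t
  induction t with
  | zero =>
      have : ∑ sa : S × A, |d1 0 sa - d2 0 sa| ≤ 2 * επ := by
        simp only [hd1, hd2, marginal, Fintype.sum_prod_type]
        have h1 : ∀ s : S, ∑ a : A,
            |(ρ0 s).toReal * ((π1 s) a).toReal - (ρ0 s).toReal * ((π2 s) a).toReal|
            = (ρ0 s).toReal * (2 * tv (π1 s) (π2 s)) := by
          intro s
          rw [← sum_abs_eq_two_tv, Finset.mul_sum]
          refine Finset.sum_congr rfl fun a _ => ?_
          rw [← mul_sub, abs_mul, abs_of_nonneg ENNReal.toReal_nonneg]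
        simp only [h1]
        calc ∑ s : S, (ρ0 s).toReal * (2 * tv (π1 s) (π2 s))
            ≤ ∑ s : S, (ρ0 s).toReal * (2 * επ) := by
              refine Finset.sum_le_sum fun s _ => ?_
              have := hεπ s
              have h0 : (0:ℝ) ≤ (ρ0 s).toReal := ENNReal.toReal_nonneg
              nlinarith
          _ = 2 * επ := by rw [← Finset.sum_mul, pmf_sum_one, one_mul]
      simpa using this
  | succ t ih =>
      -- pointwise bound
      have hpoint : ∀ sa : S × A, |d1 (t+1) sa - d2 (t+1) sa| ≤
          ∑ s' : S, ∑ a' : A,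
            (|d1 t (s',a') - d2 t (s',a')| * ((p2 (s',a')) sa.1).toReal *
                ((π2 sa.1) sa.2).toReal
              + d1 t (s',a') * |((p1 (s',a')) sa.1).toReal - ((p2 (s',a')) sa.1).toReal| *
                ((π2 sa.1) sa.2).toReal
              + d1 t (s',a') * ((p1 (s',a')) sa.1).toReal *
                |((π1 sa.1) sa.2).toReal - ((π2 sa.1) sa.2).toReal|) := by
        intro sa
        have hdiff : d1 (t+1) sa - d2 (t+1) sa = ∑ s' : S, ∑ a' : A,
            (d1 t (s',a') * ((p1 (s',a')) sa.1).toReal * ((π1 sa.1) sa.2).toReal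
              - d2 t (s',a') * ((p2 (s',a')) sa.1).toReal * ((π2 sa.1) sa.2).toReal) := by
          simp only [hd1, hd2, marginal, Finset.sum_sub_distrib]
        rw [hdiff]
        refine le_trans (Finset.abs_sum_le_sum_abs _ _) (Finset.sum_le_sum fun s' _ => ?_)
        refine le_trans (Finset.abs_sum_le_sum_abs _ _) (Finset.sum_le_sum fun a' _ => ?_)
        have heq : d1 t (s',a') * ((p1 (s',a')) sa.1).toReal * ((π1 sa.1) sa.2).toReal
              - d2 t (s',a') * ((p2 (s',a')) sa.1).toReal * ((π2 sa.1) sa.2).toReal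
            = (d1 t (s',a') - d2 t (s',a')) * ((p2 (s',a')) sa.1).toReal *
                ((π2 sa.1) sa.2).toReal
              + d1 t (s',a') * (((p1 (s',a')) sa.1).toReal - ((p2 (s',a')) sa.1).toReal) *
                ((π2 sa.1) sa.2).toReal
              + d1 t (s',a') * ((p1 (s',a')) sa.1).toReal *
                (((π1 sa.1) sa.2).toReal - ((π2 sa.1) sa.2).toReal) := by ring
        rw [heq]
        refine le_trans (abs_add_le _ _) ?_
        refine add_le_add (le_trans (abs_add_le _ _) (add_le_add ?_ ?_)) ?_
        · rw [abs_mul, abs_mul, abs_of_nonneg (ENNReal.toReal_nonneg),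
            abs_of_nonneg (ENNReal.toReal_nonneg)]
        · rw [abs_mul, abs_mul,
            abs_of_nonneg (marginal_nonneg ρ0 (fun _ => π1) (fun _ => p1) t _),
            abs_of_nonneg (ENNReal.toReal_nonneg)]
        · rw [abs_mul, abs_mul,
            abs_of_nonneg (marginal_nonneg ρ0 (fun _ => π1) (fun _ => p1) t _),
            abs_of_nonneg (ENNReal.toReal_nonneg)]
      have hsum : ∑ sa : S × A, |d1 (t+1) sa - d2 (t+1) sa| ≤
          (∑ sa : S × A, |d1 t sa - d2 t sa|) + 2 * εm + 2 * επ := by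
        have step1 : ∑ sa : S × A, |d1 (t+1) sa - d2 (t+1) sa| ≤
            (∑ sa : S × A, ∑ s' : S, ∑ a' : A,
              |d1 t (s',a') - d2 t (s',a')| * ((p2 (s',a')) sa.1).toReal *
                ((π2 sa.1) sa.2).toReal)
            + (∑ sa : S × A, ∑ s' : S, ∑ a' : A,
              d1 t (s',a') * |((p1 (s',a')) sa.1).toReal - ((p2 (s',a')) sa.1).toReal| *
                ((π2 sa.1) sa.2).toReal)
            + (∑ sa : S × A, ∑ s' : S, ∑ a' : A,
              d1 t (s',a') * ((p1 (s',a')) sa.1).toReal *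
                |((π1 sa.1) sa.2).toReal - ((π2 sa.1) sa.2).toReal|) := by
          refine le_trans (Finset.sum_le_sum fun sa _ => hpoint sa) (le_of_eq ?_)
          simp only [Finset.sum_add_distrib]
        have hA : ∑ sa : S × A, ∑ s' : S, ∑ a' : A,
            |d1 t (s',a') - d2 t (s',a')| * ((p2 (s',a')) sa.1).toReal *
              ((π2 sa.1) sa.2).toReal = ∑ sa : S × A, |d1 t sa - d2 t sa| := by
          simp only [Fintype.sum_prod_type]
          rw [sum_comm4]
          simp only [← Finset.mul_sum, pmf_sum_one, mul_one]
        have hB : ∑ sa : S × A, ∑ s' : S, ∑ a' : A,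
            d1 t (s',a') * |((p1 (s',a')) sa.1).toReal - ((p2 (s',a')) sa.1).toReal| *
              ((π2 sa.1) sa.2).toReal ≤ 2 * εm := by
          simp only [Fintype.sum_prod_type]
          rw [sum_comm4]
          have h1 : ∀ s' a', ∑ s : S, ∑ a : A,
              d1 t (s',a') * |((p1 (s',a')) s).toReal - ((p2 (s',a')) s).toReal| *
                ((π2 s) a).toReal = d1 t (s',a') * (2 * tv (p1 (s',a')) (p2 (s',a'))) := by
            intro s' a'
            simp only [← Finset.mul_sum, pmf_sum_one, mul_one, sum_abs_eq_two_tv]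
          simp only [h1]
          have h2 := hεm t
          rw [Fintype.sum_prod_type] at h2
          calc ∑ s' : S, ∑ a' : A, d1 t (s',a') * (2 * tv (p1 (s',a')) (p2 (s',a')))
              = 2 * ∑ s' : S, ∑ a' : A, d1 t (s',a') * tv (p1 (s',a')) (p2 (s',a')) := by
                rw [Finset.mul_sum]; refine Finset.sum_congr rfl fun s' _ => ?_
                rw [Finset.mul_sum]; exact Finset.sum_congr rfl fun a' _ => by ring
            _ ≤ 2 * εm := by linarith
        have hC : ∑ sa : S × A, ∑ s' : S, ∑ a' : A,
            d1 t (s',a') * ((p1 (s',a')) sa.1).toReal *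
              |((π1 sa.1) sa.2).toReal - ((π2 sa.1) sa.2).toReal| ≤ 2 * επ := by
          simp only [Fintype.sum_prod_type]
          rw [sum_comm4]
          have hεπ0 : 0 ≤ επ := le_trans (tv_nonneg _ _) (hεπ (Classical.arbitrary S))
          have h1 : ∀ s' a', ∑ s : S, ∑ a : A,
              d1 t (s',a') * ((p1 (s',a')) s).toReal *
                |((π1 s) a).toReal - ((π2 s) a).toReal|
              ≤ d1 t (s',a') * (2 * επ) := by
            intro s' a'
            have hd1n := marginal_nonneg ρ0 (fun _ => π1) (fun _ => p1) t (s', a')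
            calc ∑ s : S, ∑ a : A, d1 t (s',a') * ((p1 (s',a')) s).toReal *
                  |((π1 s) a).toReal - ((π2 s) a).toReal|
                = ∑ s : S, d1 t (s',a') * ((p1 (s',a')) s).toReal *
                    (2 * tv (π1 s) (π2 s)) := by
                  refine Finset.sum_congr rfl fun s _ => ?_
                  rw [← Finset.mul_sum, sum_abs_eq_two_tv]
              _ ≤ ∑ s : S, d1 t (s',a') * ((p1 (s',a')) s).toReal * (2 * επ) := by
                  refine Finset.sum_le_sum fun s _ => ?_
                  have h3 := hεπ s
                  have h0 : (0:ℝ) ≤ d1 t (s',a') * ((p1 (s',a')) s).toReal :=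
                    mul_nonneg hd1n ENNReal.toReal_nonneg
                  nlinarith
              _ = d1 t (s',a') * (2 * επ) := by
                  rw [← Finset.sum_mul, ← Finset.mul_sum, pmf_sum_one, mul_one]
          have hsum1 := marginal_sum_one ρ0 (fun _ => π1) (fun _ => p1) t
          rw [Fintype.sum_prod_type] at hsum1
          calc ∑ s' : S, ∑ a' : A, ∑ s : S, ∑ a : A,
              d1 t (s',a') * ((p1 (s',a')) s).toReal *
                |((π1 s) a).toReal - ((π2 s) a).toReal|
              ≤ ∑ s' : S, ∑ a' : A, d1 t (s',a') * (2 * επ) :=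
                Finset.sum_le_sum fun s' _ => Finset.sum_le_sum fun a' _ => h1 s' a'
            _ = (∑ s' : S, ∑ a' : A, d1 t (s',a')) * (2 * επ) := by
                rw [Finset.sum_mul]
                exact Finset.sum_congr rfl fun s' _ => (Finset.sum_mul _ _ _).symm
            _ = 2 * επ := by rw [hsum1, one_mul]
        rw [hA] at step1
        linarith
      have : ((t:ℝ)+1) * (εm + επ) + επ = (t * (εm + επ) + επ) + εm + επ := by ring
      rw [Nat.cast_succ, this]
      linarith

end Aux

/-- Branched returns bound (Lemma B.3). -/
theorem returns_bound
    {S A : Type*} [Fintype S] [Fintype A] [Nonempty S] [Nonempty A]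
    (p1 p2 : S × A → PMF S) (π1 π2 : S → PMF A) (ρ0 : PMF S)
    (r : S × A → ℝ) (rmax : ℝ) (hrmax : 0 ≤ rmax) (hr : ∀ sa : S × A, |r sa| ≤ rmax)
    (γ : ℝ) (hγ0 : 0 < γ) (hγ1 : γ < 1) (εm επ : ℝ)
    (hεm : ∀ t : ℕ, ∑ sa : S × A,
      marginal ρ0 (fun _ => π1) (fun _ => p1) t sa * tv (p1 sa) (p2 sa) ≤ εm)
    (hεπ : ∀ s : S, tv (π1 s) (π2 s) ≤ επ) :
    |ret γ r (marginal ρ0 (fun _ => π1) (fun _ => p1)) -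
        ret γ r (marginal ρ0 (fun _ => π2) (fun _ => p2))| ≤
      2 * rmax * (γ * (επ + εm) / (1 - γ) ^ 2 + επ / (1 - γ)) := by
  have hγnn : (0:ℝ) ≤ γ := le_of_lt hγ0
  have hγn : ‖γ‖ < 1 := by rw [Real.norm_eq_abs, abs_of_nonneg hγnn]; exact hγ1
  have h1γ : (0:ℝ) < 1 - γ := by linarith
  set d1 := marginal ρ0 (fun _ => π1) (fun _ => p1) with hd1
  set d2 := marginal ρ0 (fun _ => π2) (fun _ => p2) with hd2
  set S1 : ℕ → ℝ := fun t => ∑ sa : S × A, d1 t sa * r sa with hS1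
  set S2 : ℕ → ℝ := fun t => ∑ sa : S × A, d2 t sa * r sa with hS2
  have hd1nn : ∀ t sa, 0 ≤ d1 t sa := fun t sa =>
    marginal_nonneg ρ0 (fun _ => π1) (fun _ => p1) t sa
  have hd2nn : ∀ t sa, 0 ≤ d2 t sa := fun t sa =>
    marginal_nonneg ρ0 (fun _ => π2) (fun _ => p2) t sa
  have hd1sum : ∀ t, ∑ sa : S × A, d1 t sa = 1 := fun t =>
    marginal_sum_one ρ0 (fun _ => π1) (fun _ => p1) t
  have hd2sum : ∀ t, ∑ sa : S × A, d2 t sa = 1 := fun t =>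
    marginal_sum_one ρ0 (fun _ => π2) (fun _ => p2) t
  have hS1b : ∀ t, |S1 t| ≤ rmax := by
    intro t
    calc |S1 t| ≤ ∑ sa : S × A, |d1 t sa * r sa| := Finset.abs_sum_le_sum_abs _ _
      _ ≤ ∑ sa : S × A, d1 t sa * rmax := Finset.sum_le_sum fun sa _ => by
          rw [abs_mul, abs_of_nonneg (hd1nn t sa)]
          exact mul_le_mul_of_nonneg_left (hr sa) (hd1nn t sa)
      _ = rmax := by rw [← Finset.sum_mul, hd1sum, one_mul]
  have hS2b : ∀ t, |S2 t| ≤ rmax := by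
    intro t
    calc |S2 t| ≤ ∑ sa : S × A, |d2 t sa * r sa| := Finset.abs_sum_le_sum_abs _ _
      _ ≤ ∑ sa : S × A, d2 t sa * rmax := Finset.sum_le_sum fun sa _ => by
          rw [abs_mul, abs_of_nonneg (hd2nn t sa)]
          exact mul_le_mul_of_nonneg_left (hr sa) (hd2nn t sa)
      _ = rmax := by rw [← Finset.sum_mul, hd2sum, one_mul]
  have hkey : ∀ t : ℕ, |S1 t - S2 t| ≤ 2 * rmax * (t * (εm + επ) + επ) := by
    intro t
    have hdm := sum_marginal_abs_le ρ0 p1 p2 π1 π2 εm επ hεm hεπ t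
    have hrepr : S1 t - S2 t = ∑ sa : S × A, (d1 t sa - d2 t sa) * r sa := by
      simp only [hS1, hS2, sub_mul, Finset.sum_sub_distrib]
    rw [hrepr]
    calc |∑ sa : S × A, (d1 t sa - d2 t sa) * r sa|
        ≤ ∑ sa : S × A, |(d1 t sa - d2 t sa) * r sa| := Finset.abs_sum_le_sum_abs _ _
      _ ≤ ∑ sa : S × A, |d1 t sa - d2 t sa| * rmax := Finset.sum_le_sum fun sa _ => by
          rw [abs_mul]
          exact mul_le_mul_of_nonneg_left (hr sa) (abs_nonneg _)
      _ = (∑ sa : S × A, |d1 t sa - d2 t sa|) * rmax := (Finset.sum_mul _ _ _).symm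
      _ ≤ 2 * ((t:ℝ) * (εm + επ) + επ) * rmax :=
          mul_le_mul_of_nonneg_right hdm hrmax
      _ = 2 * rmax * ((t:ℝ) * (εm + επ) + επ) := by ring
  have hgeo : Summable (fun t : ℕ => γ ^ t) := summable_geometric_of_lt_one hγnn hγ1
  have hsum1 : Summable (fun t : ℕ => γ ^ t * S1 t) := by
    refine Summable.of_norm_bounded (hgeo.mul_left rmax) fun t => ?_
    rw [norm_mul, norm_pow, Real.norm_eq_abs, Real.norm_eq_abs, abs_of_nonneg hγnn]
    calc γ ^ t * |S1 t| ≤ γ ^ t * rmax :=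
          mul_le_mul_of_nonneg_left (hS1b t) (pow_nonneg hγnn t)
      _ = rmax * γ ^ t := mul_comm _ _
  have hsum2 : Summable (fun t : ℕ => γ ^ t * S2 t) := by
    refine Summable.of_norm_bounded (hgeo.mul_left rmax) fun t => ?_
    rw [norm_mul, norm_pow, Real.norm_eq_abs, Real.norm_eq_abs, abs_of_nonneg hγnn]
    calc γ ^ t * |S2 t| ≤ γ ^ t * rmax :=
          mul_le_mul_of_nonneg_left (hS2b t) (pow_nonneg hγnn t)
      _ = rmax * γ ^ t := mul_comm _ _
  have hdiff : ret γ r d1 - ret γ r d2 = ∑' t : ℕ, γ ^ t * (S1 t - S2 t) := by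
    have h1 : ret γ r d1 = ∑' t : ℕ, γ ^ t * S1 t := rfl
    have h2 : ret γ r d2 = ∑' t : ℕ, γ ^ t * S2 t := rfl
    rw [h1, h2, ← Summable.tsum_sub hsum1 hsum2]
    exact tsum_congr fun t => by ring
  set g : ℕ → ℝ := fun t => 2 * rmax * (εm + επ) * ((t:ℝ) * γ ^ t) +
    2 * rmax * επ * γ ^ t with hg
  have hmono : Summable (fun t : ℕ => (t:ℝ) * γ ^ t) := by
    have := summable_pow_mul_geometric_of_norm_lt_one 1 hγn (R := ℝ)
    simpa using this
  have hgs : Summable g := (hmono.mul_left _).add (hgeo.mul_left _)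
  have hnorm : ∀ t : ℕ, ‖γ ^ t * (S1 t - S2 t)‖ ≤ g t := by
    intro t
    rw [Real.norm_eq_abs, abs_mul, abs_pow, abs_of_nonneg hγnn]
    calc γ ^ t * |S1 t - S2 t| ≤ γ ^ t * (2 * rmax * ((t:ℝ) * (εm + επ) + επ)) :=
          mul_le_mul_of_nonneg_left (hkey t) (pow_nonneg hγnn t)
      _ = g t := by rw [hg]; ring
  have hns : Summable (fun t : ℕ => ‖γ ^ t * (S1 t - S2 t)‖) :=
    Summable.of_nonneg_of_le (fun t => norm_nonneg _) hnorm hgs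
  have hgval : ∑' t : ℕ, g t = 2 * rmax * (γ * (επ + εm) / (1 - γ) ^ 2 + επ / (1 - γ)) := by
    rw [hg, Summable.tsum_add (hmono.mul_left _) (hgeo.mul_left _), tsum_mul_left, tsum_mul_left,
      tsum_coe_mul_geometric_of_norm_lt_one hγn, tsum_geometric_of_lt_one hγnn hγ1]
    field_simp
    ring
  calc |ret γ r d1 - ret γ r d2| = ‖∑' t : ℕ, γ ^ t * (S1 t - S2 t)‖ := by
        rw [hdiff, Real.norm_eq_abs]
    _ ≤ ∑' t : ℕ, ‖γ ^ t * (S1 t - S2 t)‖ := norm_tsum_le_tsum_norm hns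
    _ ≤ ∑' t : ℕ, g t := Summable.tsum_le_tsum hnorm hns hgs
    _ = 2 * rmax * (γ * (επ + εm) / (1 - γ) ^ 2 + επ / (1 - γ)) := hgval
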